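/- Maximum principle: if v is a (possibly discontinuous, bounded below) subsolution of the critical equation and w is a continuous supersolution (w ≥ T(w)), and v ≤ w on the projected Aubry set A = {y : h(y,y)=0}, then v ≤ w on all of M. -/

import Mathlib

open Filter

/-- The minimal cost over chains of length `n` from `x` to `y`. -/
noncomputable def minChainCost {M : Type*} (c : M × M → ℝ) (n : ℕ) (x y : M) : ℝ :=
  sInf {r : ℝ | ∃ p : ℕ → M, p 0 = x ∧ p n = y ∧
    r = ∑ i ∈ Finset.range n, c (p i, p (i + 1))}

/-- The Peierls barrier `h(x, y) = liminf_n c_n(x, y)` (critical value `0`). -/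
noncomputable def peierls {M : Type*} (c : M × M → ℝ) (x y : M) : ℝ :=
  Filter.liminf (fun n => minChainCost c n x y) Filter.atTop

/-- Maximum principle: if `v` is a (possibly discontinuous, bounded below) subsolution
and `w` a continuous supersolution of the critical equation (critical value `0`), and
`v ≤ w` on the projected Aubry set `A = {y : h(y,y) = 0}`, then `v ≤ w` on `M`. -/
theorem maximum_principle
    {M : Type*} [MetricSpace M] [CompactSpace M] [Nonempty M]
    (c : M × M → ℝ) (hc : Continuous c)
    (hcrit : ∃ v : C(M, ℝ), ∀ x : M, v x = ⨅ y : M, (v y + c (y, x)))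
    (v : M → ℝ) (hvb : BddBelow (Set.range v))
    (hv : ∀ x : M, v x ≤ ⨅ y : M, (v y + c (y, x)))
    (w : C(M, ℝ)) (hw : ∀ x : M, w x ≥ ⨅ y : M, (w y + c (y, x)))
    (hvw : ∀ y : M, peierls c y y = 0 → v y ≤ w y) :
    ∀ x : M, v x ≤ w x := by
  intro x
  obtain ⟨v₀, hv₀⟩ := hcrit
  -- c is bounded below
  obtain ⟨Bc, hBc⟩ : ∃ B : ℝ, ∀ p : M × M, B ≤ c p := by
    obtain ⟨B, hB⟩ := (isCompact_range hc).bddBelow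
    exact ⟨B, fun p => hB (Set.mem_range_self p)⟩
  obtain ⟨bv, hbv⟩ := hvb
  have hbv' : ∀ y, bv ≤ v y := fun y => hbv (Set.mem_range_self y)
  have contBdd : ∀ f : C(M, ℝ), ∃ B : ℝ, ∀ y : M, B ≤ f y := fun f => by
    obtain ⟨B, hB⟩ := (isCompact_range f.continuous).bddBelow
    exact ⟨B, fun y => hB (Set.mem_range_self y)⟩
  obtain ⟨b₀, hb₀⟩ := contBdd v₀
  have bdd : ∀ (f : M → ℝ) (bf : ℝ), (∀ y, bf ≤ f y) → ∀ a : M,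
      BddBelow (Set.range fun y => f y + c (y, a)) := by
    intro f bf hbf a
    refine ⟨bf + Bc, ?_⟩
    rintro r ⟨y, rfl⟩
    exact add_le_add (hbf y) (hBc _)
  -- pairwise subsolution inequalities
  have hv2 : ∀ a y : M, v a ≤ v y + c (y, a) := fun a y =>
    (hv a).trans (ciInf_le (bdd v bv hbv' a) y)
  have hv₀2 : ∀ a y : M, v₀ a ≤ v₀ y + c (y, a) := fun a y =>
    (hv₀ a).le.trans (ciInf_le (bdd v₀ b₀ hb₀ a) y)
  -- lower bound on chain costs
  have chain_lb : ∀ (n : ℕ) (p : ℕ → M),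
      v₀ (p n) - v₀ (p 0) ≤ ∑ i ∈ Finset.range n, c (p i, p (i + 1)) := by
    intro n p
    induction n with
    | zero => simp
    | succ n ih =>
      rw [Finset.sum_range_succ]
      have := hv₀2 (p (n + 1)) (p n)
      linarith
  have mcc_nonneg : ∀ (n : ℕ) (a : M), 0 ≤ minChainCost c n a a := by
    intro n a
    refine le_csInf ⟨∑ i ∈ Finset.range n, c (a, a), fun _ => a, rfl, rfl, rfl⟩ ?_
    rintro r ⟨p, h0, hn, rfl⟩
    have := chain_lb n p
    rw [h0, hn] at this
    linarith
  have mcc_le : ∀ (n : ℕ) (a : M) (p : ℕ → M), p 0 = a → p n = a →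
      minChainCost c n a a ≤ ∑ i ∈ Finset.range n, c (p i, p (i + 1)) := by
    intro n a p h0 hn
    refine csInf_le ⟨0, ?_⟩ ⟨p, h0, hn, rfl⟩
    rintro r ⟨q, q0, qn, rfl⟩
    have := chain_lb n q
    rw [q0, qn] at this
    linarith
  -- construction of the discrete backward orbit
  have hF : ∀ a : M, ∃ b : M, w b + c (b, a) ≤ w a := by
    intro a
    have hcont : Continuous fun y : M => w y + c (y, a) :=
      w.continuous.add (hc.comp (continuous_id.prodMk continuous_const))
    obtain ⟨b, -, hb⟩ := isCompact_univ.exists_isMinOn Set.univ_nonempty hcont.continuousOn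
    refine ⟨b, le_trans (le_ciInf fun y => hb (Set.mem_univ y)) (hw a)⟩
  choose F hFs using hF
  set ξ : ℕ → M := fun k => F^[k] x with hξdef
  have hξ0 : ξ 0 = x := rfl
  have hξs : ∀ k, ξ (k + 1) = F (ξ k) := fun k => Function.iterate_succ_apply' F k x
  have hstep : ∀ k, w (ξ (k + 1)) + c (ξ (k + 1), ξ k) ≤ w (ξ k) := fun k => by
    rw [hξs k]; exact hFs (ξ k)
  set S : ℕ → ℝ := fun k => ∑ j ∈ Finset.range k, c (ξ (j + 1), ξ j) with hSdef
  have hSsucc : ∀ k, S (k + 1) = S k + c (ξ (k + 1), ξ k) := fun k =>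
    Finset.sum_range_succ _ k
  have hwtel : ∀ a b : ℕ, a ≤ b → w (ξ b) + (S b - S a) ≤ w (ξ a) := by
    intro a b hab
    induction b, hab using Nat.le_induction with
    | base => simp
    | succ b hab ih =>
      have h1 := hstep b
      have h2 := hSsucc b
      linarith
  have hvtel : ∀ k : ℕ, v x ≤ v (ξ k) + S k := by
    intro k
    induction k with
    | zero => simp [hξ0, hSdef]
    | succ k ih =>
      have h1 := hv2 (ξ k) (ξ (k + 1))
      have h2 := hSsucc k
      linarith
  -- accumulation point
  obtain ⟨z, φ, hφ, hz⟩ := CompactSpace.tendsto_subseq ξ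
  have hφle : ∀ i m : ℕ, φ i + m ≤ φ (i + m) := by
    intro i m
    induction m with
    | zero => simp
    | succ m ih =>
      have : φ (i + m) < φ (i + (m + 1)) := hφ (by omega)
      omega
  -- uniform continuity
  have hunif := Metric.uniformContinuous_iff.mp
    (CompactSpace.uniformContinuous_of_continuous hc)
  have hzd : ∀ δ : ℝ, 0 < δ → ∃ N : ℕ, ∀ i ≥ N, dist (ξ (φ i)) z < δ := by
    intro δ hδ
    exact Metric.tendsto_atTop.mp hz δ hδ
  have hwz : ∀ δ : ℝ, 0 < δ → ∃ N : ℕ, ∀ i ≥ N, |w (ξ (φ i)) - w z| < δ := by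
    intro δ hδ
    have : Filter.Tendsto (fun i => w (ξ (φ i))) atTop (nhds (w z)) :=
      (w.continuous.tendsto z).comp hz
    obtain ⟨N, hN⟩ := Metric.tendsto_atTop.mp this δ hδ
    exact ⟨N, fun i hi => by simpa [Real.dist_eq] using hN i hi⟩
  -- frequently small chain costs from z to z
  have key : ∀ ε : ℝ, 0 < ε → ∀ N : ℕ, ∃ n ≥ N, minChainCost c n z z ≤ ε := by
    intro ε hε N
    obtain ⟨δ, hδ, hδc⟩ := hunif (ε / 4) (by positivity)
    obtain ⟨N₁, hN₁⟩ := hzd δ hδ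
    obtain ⟨N₂, hN₂⟩ := hwz (ε / 4) (by positivity)
    set i := max N₁ N₂ with hi
    set j := i + max N 2 with hj
    set a := φ i with ha
    set b := φ j with hb
    have hij : i ≤ j := Nat.le_add_right _ _
    have hab : a + max N 2 ≤ b := hφle i (max N 2)
    set n := b - a with hn
    have hn2 : 2 ≤ n := by omega
    have hNn : N ≤ n := by omega
    have hban : b = a + n := by omega
    have hdista : dist (ξ a) z < δ := hN₁ i (le_max_left _ _)
    have hdistb : dist (ξ b) z < δ := hN₁ j (le_trans (le_max_left _ _) hij)
    have hwa : |w (ξ a) - w z| < ε / 4 := hN₂ i (le_max_right _ _)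
    have hwb : |w (ξ b) - w z| < ε / 4 := hN₂ j (le_trans (le_max_right _ _) hij)
    -- the comparison chain
    set q : ℕ → M := fun m => if m = 0 then z else if m = n then z else ξ (b - m) with hq
    set p : ℕ → M := fun m => ξ (b - m) with hp
    have hq0 : q 0 = z := by simp [hq]
    have hqn : q n = z := by simp [hq]
    -- true chain cost equals S b - S a
    have hT : ∑ m ∈ Finset.range n, c (p m, p (m + 1)) = S b - S a := by
      have h1 : S b - S a = ∑ j ∈ Finset.Ico a b, c (ξ (j + 1), ξ j) := by
        rw [hSdef]
        rw [Finset.sum_Ico_eq_sub _ (by omega : a ≤ b)]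
      have h2 : ∑ j ∈ Finset.Ico a b, c (ξ (j + 1), ξ j)
          = ∑ m ∈ Finset.range n, c (ξ (a + m + 1), ξ (a + m)) := by
        rw [Finset.sum_Ico_eq_sum_range]
      have h3 := Finset.sum_range_reflect (fun j => c (ξ (a + j + 1), ξ (a + j))) n
      rw [h1, h2, ← h3]
      apply Finset.sum_congr rfl
      intro m hm
      simp only [Finset.mem_range] at hm
      show c (p m, p (m + 1)) = c (ξ (a + (n - 1 - m) + 1), ξ (a + (n - 1 - m)))
      simp only [hp]
      have e1 : b - m = a + (n - 1 - m) + 1 := by omega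
      have e2 : b - (m + 1) = a + (n - 1 - m) := by omega
      rw [e1, e2]
    -- difference of costs
    have hmid : ∀ m ∈ Finset.range n, m ∉ ({0, n - 1} : Finset ℕ) →
        c (q m, q (m + 1)) - c (p m, p (m + 1)) = 0 := by
      intro m hm hm'
      simp only [Finset.mem_range] at hm
      simp only [Finset.mem_insert, Finset.mem_singleton] at hm'
      push_neg at hm'
      have hq1 : q m = p m := by
        simp only [hq, hp, if_neg hm'.1, if_neg (by omega : m ≠ n)]
      have hq2 : q (m + 1) = p (m + 1) := by
        simp only [hq, hp, if_neg (by omega : m + 1 ≠ 0), if_neg (by omega : m + 1 ≠ n)]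
      rw [hq1, hq2]
      ring
    have hsplit : ∑ m ∈ Finset.range n, (c (q m, q (m + 1)) - c (p m, p (m + 1))) =
        (c (q 0, q 1) - c (p 0, p 1)) +
        (c (q (n - 1), q n) - c (p (n - 1), p n)) := by
      rw [← Finset.sum_subset (s₁ := ({0, n - 1} : Finset ℕ)) ?_ ?_]
      · rw [Finset.sum_pair (by omega : (0 : ℕ) ≠ n - 1)]
        have : n - 1 + 1 = n := by omega
        rw [this]
      · intro m hm
        simp only [Finset.mem_insert, Finset.mem_singleton] at hm
        simp only [Finset.mem_range]
        omega
      · exact hmid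
    have hd0 : c (q 0, q 1) - c (p 0, p 1) ≤ ε / 4 := by
      have hq1 : q 1 = ξ (b - 1) := by
        simp only [hq, if_neg (one_ne_zero), if_neg (by omega : 1 ≠ n)]
      have hp0 : p 0 = ξ b := by simp [hp]
      have hp1 : p 1 = ξ (b - 1) := rfl
      rw [hq0, hq1, hp0, hp1]
      have hdd : dist ((z, ξ (b - 1)) : M × M) (ξ b, ξ (b - 1)) < δ := by
        rw [Prod.dist_eq]
        simp only [dist_self]
        rw [dist_comm]
        simpa using hdistb
      have := hδc hdd
      rw [Real.dist_eq] at this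
      have h := abs_le.mp this.le
      linarith [h.2]
    have hd1 : c (q (n - 1), q n) - c (p (n - 1), p n) ≤ ε / 4 := by
      have hqn1 : q (n - 1) = ξ (a + 1) := by
        simp only [hq, if_neg (by omega : n - 1 ≠ 0), if_neg (by omega : n - 1 ≠ n)]
        congr 1
        omega
      have hpn1 : p (n - 1) = ξ (a + 1) := by
        simp only [hp]
        congr 1
        omega
      have hpn : p n = ξ a := by
        simp only [hp]
        congr 1
        omega
      rw [hqn, hqn1, hpn1, hpn]
      have hdd : dist ((ξ (a + 1), z) : M × M) (ξ (a + 1), ξ a) < δ := by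
        rw [Prod.dist_eq]
        simp only [dist_self]
        rw [dist_comm]
        simpa using hdista
      have := hδc hdd
      rw [Real.dist_eq] at this
      have h := abs_le.mp this.le
      linarith [h.2]
    -- assemble
    have hQT : ∑ m ∈ Finset.range n, c (q m, q (m + 1)) ≤ S b - S a + ε / 2 := by
      have := Finset.sum_sub_distrib (s := Finset.range n)
        (f := fun m => c (q m, q (m + 1))) (g := fun m => c (p m, p (m + 1)))
      rw [hsplit] at this
      have habs := abs_le.mp hwa.le
      linarith [hd0, hd1, hT, this.symm.le, this.le]
    have hSwb : S b - S a ≤ w (ξ a) - w (ξ b) := by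
      have := hwtel a b (by omega)
      linarith
    have hfinal : minChainCost c n z z ≤ ε := by
      have h1 := mcc_le n z q hq0 hqn
      have ha1 := abs_le.mp hwa.le
      have hb1 := abs_le.mp hwb.le
      calc minChainCost c n z z ≤ ∑ m ∈ Finset.range n, c (q m, q (m + 1)) := h1
        _ ≤ S b - S a + ε / 2 := hQT
        _ ≤ (w (ξ a) - w (ξ b)) + ε / 2 := by linarith
        _ ≤ ε := by linarith
    exact ⟨n, hNn, hfinal⟩
  -- z is in the Aubry set
  have hbdd : IsBoundedUnder (· ≥ ·) atTop (fun n => minChainCost c n z z) :=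
    Filter.isBoundedUnder_of ⟨0, fun n => mcc_nonneg n z⟩
  have hle : peierls c z z ≤ 0 := by
    refine le_of_forall_pos_le_add fun ε hε => ?_
    rw [zero_add]
    exact liminf_le_of_frequently_le (frequently_atTop.2 fun N => by
      obtain ⟨n, hn, h⟩ := key ε hε N; exact ⟨n, hn, h⟩) hbdd
  have hcob : IsCoboundedUnder (· ≥ ·) atTop (fun n => minChainCost c n z z) := by
    refine ⟨1, fun r hr => ?_⟩
    rw [Filter.eventually_map] at hr
    obtain ⟨N, hN⟩ := Filter.eventually_atTop.mp hr
    obtain ⟨n, hn, h⟩ := key 1 one_pos N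
    exact le_trans (hN n hn) h
  have hge : 0 ≤ peierls c z z :=
    le_liminf_of_le hcob (Filter.Eventually.of_forall fun n => mcc_nonneg n z)
  have hzA : v z ≤ w z := hvw z (le_antisymm hle hge)
  -- final estimate
  refine le_of_forall_pos_le_add fun ε hε => ?_
  obtain ⟨δ, hδ, hδc⟩ := hunif (ε / 2) (by positivity)
  obtain ⟨N₁, hN₁⟩ := hzd δ hδ
  obtain ⟨N₂, hN₂⟩ := hwz (ε / 2) (by positivity)
  set i := max 1 (max N₁ N₂) with hi
  set a := φ i with ha
  have ha1 : 1 ≤ a := le_trans (le_max_left _ _) (le_trans hφ.le_apply (le_refl _))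
  have hdista : dist (ξ a) z < δ := hN₁ i (le_trans (le_max_left _ _) (le_max_right _ _))
  have hwa : |w (ξ a) - w z| < ε / 2 := hN₂ i (le_trans (le_max_right _ _) (le_max_right _ _))
  have h1 : v x ≤ v (ξ (a - 1)) + S (a - 1) := hvtel (a - 1)
  have h2 : v (ξ (a - 1)) ≤ v z + c (z, ξ (a - 1)) := hv2 (ξ (a - 1)) z
  have h3 : c (z, ξ (a - 1)) ≤ c (ξ a, ξ (a - 1)) + ε / 2 := by
    have hdd : dist ((z, ξ (a - 1)) : M × M) (ξ a, ξ (a - 1)) < δ := by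
      rw [Prod.dist_eq]
      simp only [dist_self]
      rw [dist_comm]
      simpa using hdista
    have := hδc hdd
    rw [Real.dist_eq] at this
    have h := abs_le.mp this.le
    linarith [h.2]
  have h4 : S (a - 1) + c (ξ a, ξ (a - 1)) = S a := by
    have := hSsucc (a - 1)
    have e : a - 1 + 1 = a := by omega
    rw [e] at this
    linarith
  have h5 : S a ≤ w x - w (ξ a) := by
    have := hwtel 0 a (Nat.zero_le _)
    have hS0 : S 0 = 0 := by simp [hSdef]
    rw [hξ0, hS0] at this
    linarith
  have habs := abs_le.mp hwa.le
  linarith
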